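/- The vector field (x + xy + x³, y − x² + y² − x⁴) commutes with the Kukles field (−y, x + 3xy + x³); that is, their Lie bracket vanishes identically on ℝ². -/

import Mathlib

lemma deriv_hmul (c t : ℝ) : deriv (HMul.hMul c) t = c := by
  have := (hasDerivAt_id t).const_mul c
  simpa using this.deriv

theorem kukles_commuting_field :
    let p : ℝ → ℝ → ℝ := fun x y => x + x * y + x ^ 3
    let q : ℝ → ℝ → ℝ := fun x y => y - x ^ 2 + y ^ 2 - x ^ 4
    let r : ℝ → ℝ → ℝ := fun x y => -y
    let s : ℝ → ℝ → ℝ := fun x y => x + 3 * x * y + x ^ 3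
    ∀ x y : ℝ,
      r x y * deriv (fun t => p t y) x + s x y * deriv (fun t => p x t) y -
          p x y * deriv (fun t => r t y) x - q x y * deriv (fun t => r x t) y = 0 ∧
      r x y * deriv (fun t => q t y) x + s x y * deriv (fun t => q x t) y -
          p x y * deriv (fun t => s t y) x - q x y * deriv (fun t => s x t) y = 0 := by
  intro p q r s x y
  simp only [p, q, r, s]
  have hpx : deriv (fun t : ℝ => t + t * y + t ^ 3) x = 1 + y + 3 * x ^ 2 := by
    rw [deriv_fun_add (by fun_prop) (by fun_prop), deriv_fun_add (by fun_prop) (by fun_prop)]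
    simp [deriv_mul_const_field]
  have hpy : deriv (fun t : ℝ => x + x * t + x ^ 3) y = x := by
    rw [deriv_fun_add (by fun_prop) (by fun_prop), deriv_fun_add (by fun_prop) (by fun_prop)]
    simp [deriv_hmul]
  have hqx : deriv (fun t : ℝ => y - t ^ 2 + y ^ 2 - t ^ 4) x = -2 * x - 4 * x ^ 3 := by
    rw [deriv_fun_sub (by fun_prop) (by fun_prop), deriv_fun_add (by fun_prop) (by fun_prop),
      deriv_fun_sub (by fun_prop) (by fun_prop)]
    simp
  have hqy : deriv (fun t : ℝ => t - x ^ 2 + t ^ 2 - x ^ 4) y = 1 + 2 * y := by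
    rw [deriv_fun_sub (by fun_prop) (by fun_prop), deriv_fun_add (by fun_prop) (by fun_prop),
      deriv_fun_sub (by fun_prop) (by fun_prop)]
    simp
  have hrx : deriv (fun _ : ℝ => -y) x = 0 := deriv_const x (-y)
  have hry : deriv (fun t : ℝ => -t) y = -1 := by
    simpa using deriv_neg (a := y)
  have hsx : deriv (fun t : ℝ => t + 3 * t * y + t ^ 3) x = 1 + 3 * y + 3 * x ^ 2 := by
    have h : (fun t : ℝ => t + 3 * t * y + t ^ 3) = fun t => t + (3 * y) * t + t ^ 3 := by
      ext t; ring
    rw [h, deriv_fun_add (by fun_prop) (by fun_prop), deriv_fun_add (by fun_prop) (by fun_prop)]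
    simp [deriv_hmul]
  have hsy : deriv (fun t : ℝ => x + 3 * x * t + x ^ 3) y = 3 * x := by
    rw [deriv_fun_add (by fun_prop) (by fun_prop), deriv_fun_add (by fun_prop) (by fun_prop)]
    simp [deriv_hmul]
  rw [hpx, hpy, hqx, hqy, hrx, hry, hsx, hsy]
  constructor <;> ring
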